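/- Let R > 0, S > 0, M > 0 and L > 0. Let g : ℝ^d × U → ℝ^d be such that for each x the map u ↦ g(x,u) is measurable and square ν-integrable, and for all x, y ∈ ℝ^d with |x| ≤ R + 1 and |y| ≤ R + 1 one has ∫_U |g(x,u) − g(y,u)|² ν(du) ≤ S |x − y|² and ∫_U |g(y,u)|² ν(du) ≤ M. Let η : ℝ^d → ℝ satisfy 0 ≤ η(x) ≤ 1 for all x, η(x) = 1 for |x| ≤ R, η(x) = 0 for |x| > R + 1, and |η(x) − η(y)| ≤ L |x − y| for all x, y. Then for ALL x, y ∈ ℝ^d one has ∫_U |η(x) g(x,u) − η(y) g(y,u)|² ν(du) ≤ (2S + 2M L²) |x − y|². -/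
import Mathlib


open MeasureTheory

theorem truncated_jump_coefficient_lipschitz {d : ℕ} {U : Type*} [MeasurableSpace U]
    (ν : Measure U) [SigmaFinite ν]
    (R S M L : ℝ) (hR : 0 < R) (hS : 0 < S) (hM : 0 < M) (hL : 0 < L)
    (g : EuclideanSpace ℝ (Fin d) → U → EuclideanSpace ℝ (Fin d))
    (η : EuclideanSpace ℝ (Fin d) → ℝ)
    (hg_meas : ∀ x, Measurable (g x))
    (hg_int : ∀ x, Integrable (fun u => ‖g x u‖ ^ 2) ν)
    (hg_lip : ∀ x y : EuclideanSpace ℝ (Fin d), ‖x‖ ≤ R + 1 → ‖y‖ ≤ R + 1 →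
        ∫ u, ‖g x u - g y u‖ ^ 2 ∂ν ≤ S * ‖x - y‖ ^ 2)
    (hg_bdd : ∀ y : EuclideanSpace ℝ (Fin d), ‖y‖ ≤ R + 1 →
        ∫ u, ‖g y u‖ ^ 2 ∂ν ≤ M)
    (hη01 : ∀ x, 0 ≤ η x ∧ η x ≤ 1)
    (hη1 : ∀ x : EuclideanSpace ℝ (Fin d), ‖x‖ ≤ R → η x = 1)
    (hη0 : ∀ x : EuclideanSpace ℝ (Fin d), R + 1 < ‖x‖ → η x = 0)
    (hηLip : ∀ x y : EuclideanSpace ℝ (Fin d), |η x - η y| ≤ L * ‖x - y‖) :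
    ∀ x y : EuclideanSpace ℝ (Fin d),
      ∫ u, ‖η x • g x u - η y • g y u‖ ^ 2 ∂ν
        ≤ (2 * S + 2 * M * L ^ 2) * ‖x - y‖ ^ 2 := by
  have hLip2 : ∀ a b : EuclideanSpace ℝ (Fin d), (η a - η b) ^ 2 ≤ L ^ 2 * ‖a - b‖ ^ 2 := by
    intro a b
    have h := hηLip a b
    have h2 : (η a - η b) ^ 2 = |η a - η b| ^ 2 := (sq_abs _).symm
    have hnn : (0 : ℝ) ≤ L * ‖a - b‖ := by positivity
    rw [h2]
    nlinarith [abs_nonneg (η a - η b)]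
  have key : ∀ a b : EuclideanSpace ℝ (Fin d), R + 1 < ‖b‖ →
      ∫ u, ‖η a • g a u - η b • g b u‖ ^ 2 ∂ν ≤ (2 * S + 2 * M * L ^ 2) * ‖a - b‖ ^ 2 := by
    intro a b hb
    have hb0 : η b = 0 := hη0 b hb
    have heq : (∫ u, ‖η a • g a u - η b • g b u‖ ^ 2 ∂ν)
        = (η a) ^ 2 * ∫ u, ‖g a u‖ ^ 2 ∂ν := by
      simp only [hb0, zero_smul, sub_zero, norm_smul, Real.norm_eq_abs, mul_pow, sq_abs]
      exact integral_const_mul _ _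
    rw [heq]
    rcases le_or_gt ‖a‖ (R + 1) with ha | ha
    · have h1 : (η a) ^ 2 ≤ L ^ 2 * ‖a - b‖ ^ 2 := by
        have := hLip2 a b; rw [hb0, sub_zero] at this; exact this
      have h2 : ∫ u, ‖g a u‖ ^ 2 ∂ν ≤ M := hg_bdd a ha
      have h3 : 0 ≤ ∫ u, ‖g a u‖ ^ 2 ∂ν := integral_nonneg fun u => sq_nonneg _
      nlinarith [sq_nonneg (η a), sq_nonneg ‖a - b‖,
        mul_nonneg (sq_nonneg ‖a - b‖) hS.le]
    · rw [hη0 a ha]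
      simp only [ne_eq, OfNat.ofNat_ne_zero, not_false_eq_true, zero_pow, zero_mul]
      positivity
  intro x y
  rcases le_or_gt ‖x‖ (R + 1) with hx | hx
  · rcases le_or_gt ‖y‖ (R + 1) with hy | hy
    · -- main case: both inside the ball of radius R+1
      have hsub_int : Integrable (fun u => ‖g x u - g y u‖ ^ 2) ν := by
        have hmeas : AEStronglyMeasurable (fun u => ‖g x u - g y u‖ ^ 2) ν :=
          ((((hg_meas x).sub (hg_meas y)).norm.pow_const 2)).aestronglyMeasurable
        apply Integrable.mono' (((hg_int x).const_mul 2).add ((hg_int y).const_mul 2)) hmeas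
        filter_upwards with u
        rw [Real.norm_eq_abs, abs_of_nonneg (sq_nonneg _)]
        simp only [Pi.add_apply]
        nlinarith [norm_sub_le (g x u) (g y u), norm_nonneg (g x u - g y u),
          norm_nonneg (g x u), norm_nonneg (g y u),
          sq_nonneg (‖g x u‖ - ‖g y u‖)]
      have hpt : ∀ u, ‖η x • g x u - η y • g y u‖ ^ 2
          ≤ 2 * ‖g x u - g y u‖ ^ 2 + (2 * (η x - η y) ^ 2) * ‖g y u‖ ^ 2 := by
        intro u
        have e : η x • g x u - η y • g y u
            = η x • (g x u - g y u) + (η x - η y) • g y u := by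
          simp only [smul_sub, sub_smul]; abel
        rw [e]
        have h1 : ‖η x • (g x u - g y u)‖ = |η x| * ‖g x u - g y u‖ := by
          rw [norm_smul, Real.norm_eq_abs]
        have h2 : ‖(η x - η y) • g y u‖ = |η x - η y| * ‖g y u‖ := by
          rw [norm_smul, Real.norm_eq_abs]
        have h3 := norm_add_le (η x • (g x u - g y u)) ((η x - η y) • g y u)
        rw [h1, h2] at h3
        set s := |η x| * ‖g x u - g y u‖ with hs_def
        set t := |η x - η y| * ‖g y u‖ with ht_def
        have hs0 : 0 ≤ s := mul_nonneg (abs_nonneg _) (norm_nonneg _)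
        have ht0 : 0 ≤ t := mul_nonneg (abs_nonneg _) (norm_nonneg _)
        have hsq : ‖η x • (g x u - g y u) + (η x - η y) • g y u‖ ^ 2 ≤ (s + t) ^ 2 := by
          nlinarith [norm_nonneg (η x • (g x u - g y u) + (η x - η y) • g y u)]
        have h2st : (s + t) ^ 2 ≤ 2 * s ^ 2 + 2 * t ^ 2 := by nlinarith [sq_nonneg (s - t)]
        have hx2 : |η x| ≤ 1 := abs_le.2 ⟨by linarith [(hη01 x).1], (hη01 x).2⟩
        have hs2 : s ^ 2 ≤ ‖g x u - g y u‖ ^ 2 := by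
          rw [hs_def, mul_pow, sq_abs]
          have h01 : η x ^ 2 ≤ 1 := by nlinarith [(hη01 x).1, (hη01 x).2]
          exact mul_le_of_le_one_left (sq_nonneg _) h01
        have ht2 : t ^ 2 = (η x - η y) ^ 2 * ‖g y u‖ ^ 2 := by
          rw [ht_def, mul_pow, sq_abs]
        linarith
      calc ∫ u, ‖η x • g x u - η y • g y u‖ ^ 2 ∂ν
          ≤ ∫ u, (2 * ‖g x u - g y u‖ ^ 2 + (2 * (η x - η y) ^ 2) * ‖g y u‖ ^ 2) ∂ν := by
            apply integral_mono_of_nonneg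
            · filter_upwards with u using sq_nonneg _
            · exact (hsub_int.const_mul 2).add ((hg_int y).const_mul _)
            · filter_upwards with u using hpt u
        _ = 2 * (∫ u, ‖g x u - g y u‖ ^ 2 ∂ν)
              + (2 * (η x - η y) ^ 2) * ∫ u, ‖g y u‖ ^ 2 ∂ν := by
            rw [integral_add (hsub_int.const_mul 2) ((hg_int y).const_mul _),
              integral_const_mul, integral_const_mul]
        _ ≤ 2 * (S * ‖x - y‖ ^ 2) + (2 * (η x - η y) ^ 2) * M := by
            have h1 := hg_lip x y hx hy
            have h2 := hg_bdd y hy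
            have h4 : 0 ≤ (η x - η y) ^ 2 := sq_nonneg _
            nlinarith
        _ ≤ (2 * S + 2 * M * L ^ 2) * ‖x - y‖ ^ 2 := by
            have := hLip2 x y
            nlinarith [sq_nonneg (η x - η y)]
    · exact key x y hy
  · calc ∫ u, ‖η x • g x u - η y • g y u‖ ^ 2 ∂ν
        = ∫ u, ‖η y • g y u - η x • g x u‖ ^ 2 ∂ν := by
          congr 1; funext u; rw [norm_sub_rev]
      _ ≤ (2 * S + 2 * M * L ^ 2) * ‖y - x‖ ^ 2 := key y x hx
      _ = (2 * S + 2 * M * L ^ 2) * ‖x - y‖ ^ 2 := by rw [norm_sub_rev]
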